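/- Every directed cycle in a Best Friend Graph has length exactly two; that is, if v₁, …, v_k are distinct vertices with f(v_j) = v_{j+1} (indices mod k) and k ≥ 2, then k = 2. -/

import Mathlib

/-- Every directed cycle in a Best Friend Graph has length exactly two. -/
theorem best_friend_cycle_length_two
    {V : Type*} [Fintype V] [LinearOrder V]
    (d : V → V → ℝ) (f : V → V)
    (hd : ∀ i j, d i j = d j i)
    (hpos : ∀ i j : V, i ≠ j → 0 < d i j)
    (hf : ∀ i, f i ≠ i)
    (hmin : ∀ i k, k ≠ i → d i (f i) ≤ d i k)
    (htie : ∀ i k, k ≠ i → d i k = d i (f i) → f i ≤ k) :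
    ∀ (k : ℕ) (hk : 2 ≤ k) (v : Fin k → V), Function.Injective v →
      (∀ j : Fin k, f (v j) = v (j + ⟨1, by omega⟩)) → k = 2 := by
  intro k hk v hinj hcyc
  haveI : NeZero k := ⟨by omega⟩
  have hv1 : (1 : Fin k).val = 1 := by
    rw [Fin.val_one']
    exact Nat.mod_eq_of_lt (by omega)
  have modfact : ∀ a : ℕ, a < k → (a + 1) % k = a + 1 ∨ ((a + 1) % k = 0 ∧ a + 1 = k) := by
    intro a ha
    rcases Nat.lt_or_ge (a + 1) k with h | h
    · exact Or.inl (Nat.mod_eq_of_lt h)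
    · right
      have he : a + 1 = k := by omega
      simp [he]
  have h1 : (⟨1, by omega⟩ : Fin k) = 1 := by
    ext; rw [hv1]
  rw [h1] at hcyc
  -- distinct indices map to distinct vertices
  have hne : ∀ j j' : Fin k, j ≠ j' → v j ≠ v j' := fun j j' h h' => h (hinj h')
  have hsucc_ne : ∀ j : Fin k, j + 1 ≠ j := by
    intro j h
    have hval := congrArg Fin.val h
    rw [Fin.val_add, hv1] at hval
    rcases modfact j.val j.isLt with h' | ⟨h', h''⟩ <;> rw [h'] at hval <;> omega
  set D : Fin k → ℝ := fun j => d (v j) (v (j + 1)) with hD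
  have step : ∀ j : Fin k, D (j + 1) ≤ D j := by
    intro j
    have h2 : d (v (j+1)) (v ((j+1)+1)) ≤ d (v (j+1)) (v j) := by
      rw [← hcyc (j+1)]
      exact hmin _ _ (hne _ _ (fun h => hsucc_ne j h.symm))
    calc D (j+1) = d (v (j+1)) (v ((j+1)+1)) := rfl
      _ ≤ d (v (j+1)) (v j) := h2
      _ = D j := hd _ _
  open Fin.CommRing Fin.NatCast in
  have mono : ∀ (n : ℕ) (j : Fin k), D (j + (n : Fin k)) ≤ D j := by
    intro n
    induction n with
    | zero => intro j; simp
    | succ n ih =>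
      intro j
      have hc : (((n+1 : ℕ)) : Fin k) = (n : Fin k) + 1 := by push_cast; ring
      rw [hc, ← add_assoc]
      exact le_trans (step (j + (n : Fin k))) (ih j)
  open Fin.CommRing Fin.NatCast in
  have const : ∀ i j : Fin k, D i = D j := by
    have key : ∀ i j : Fin k, D i ≤ D j := by
      intro i j
      have hij : j + ((i - j).val : Fin k) = i := by
        rw [Fin.cast_val_eq_self]; ring
      calc D i = D (j + ((i - j).val : Fin k)) := by rw [hij]
        _ ≤ D j := mono _ j
    exact fun i j => le_antisymm (key i j) (key j i)
  have tie : ∀ j : Fin k, v (j + 1) ≤ v (j - 1) := by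
    intro j
    open Fin.CommRing Fin.NatCast in
    have hsub : (j - 1) + 1 = j := by ring
    have hne1 : v (j - 1) ≠ v j := by
      apply hne
      intro h
      have h' := congrArg (· + (1 : Fin k)) h
      simp only [hsub] at h'
      exact hsucc_ne j h'.symm
    have heq : d (v j) (v (j - 1)) = d (v j) (f (v j)) := by
      rw [hcyc j, hd]
      have hc := const (j - 1) j
      simp only [hD, hsub] at hc
      exact hc
    have ht := htie (v j) (v (j - 1)) hne1 heq
    rwa [hcyc j] at ht
  by_contra hne2
  have hk3 : 3 ≤ k := by omega
  haveI : Nonempty (Fin k) := ⟨⟨0, by omega⟩⟩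
  obtain ⟨m, hm⟩ := Finite.exists_max v
  have h := tie (m - 1)
  open Fin.CommRing Fin.NatCast in
  have hsub : (m - 1) + 1 = m := by ring
  rw [hsub] at h
  have heq : v (m - 1 - 1) = v m := le_antisymm (hm _) h
  have hmm : m - 1 - 1 = m := hinj heq
  open Fin.CommRing Fin.NatCast in
  have e : m + 1 + 1 = m := by
    conv_lhs => rw [← hmm]
    ring
  have hval := congrArg Fin.val e
  rw [Fin.val_add, Fin.val_add, hv1] at hval
  rcases modfact m.val m.isLt with h' | ⟨h', h''⟩
  · rw [h'] at hval
    have hlt : m.val + 1 < k := by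
      rw [← h']; exact Nat.mod_lt _ (by omega)
    rcases modfact (m.val + 1) hlt with h2 | ⟨h2, h3⟩ <;> rw [h2] at hval <;> omega
  · rw [h'] at hval
    have : (0 + 1) % k = 1 := Nat.mod_eq_of_lt (by omega)
    rw [this] at hval
    omega
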